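/- (Simplex Lemma) Let N ≥ 1 be an integer and k > 1 a real number. Let E ⊆ ℝ^N be a convex set whose N-dimensional Lebesgue measure satisfies |E| ≤ (N!)⁻¹·k^{-(N+1)}. Suppose that E contains N+1 rational points (p_i^{(1)}/q_i, …, p_i^{(N)}/q_i), 0 ≤ i ≤ N, where each p_i^{(j)} ∈ ℤ and each q_i is an integer with 1 ≤ q_i < k. Then these N+1 rational points all lie in some affine hyperplane of ℝ^N. -/

import Mathlib

open scoped ENNReal
open MeasureTheory

lemma simplex_set_vol (n : ℕ) :
    1 ≤ (Nat.factorial (n + 1) : ℝ≥0∞) *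
      volume {w : Fin (n + 1) → ℝ | (∀ i, 0 ≤ w i) ∧ ∑ i, w i ≤ 1} := by
  classical
  set S : Set (Fin (n + 1) → ℝ) := {w | (∀ i, 0 ≤ w i) ∧ ∑ i, w i ≤ 1} with hSdef
  set Q : Matrix (Fin (n + 1)) (Fin (n + 1)) ℝ :=
    Matrix.of fun i j => if j.val ≤ i.val then 1 else 0 with hQdef
  have hQdet : Q.det = 1 := by
    rw [Matrix.det_of_lowerTriangular Q ?_]
    · simp [hQdef]
    · intro i j hij
      simp only [OrderDual.toDual_lt_toDual] at hij
      simp only [hQdef, Matrix.of_apply]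
      rw [if_neg]
      exact fun h => absurd (Fin.lt_iff_val_lt_val.mp hij) (not_lt.mpr h)
  -- permuted matrices
  set P : Equiv.Perm (Fin (n + 1)) → Matrix (Fin (n + 1)) (Fin (n + 1)) ℝ :=
    fun σ => Q.submatrix σ.symm id with hPdef
  have hPdet : ∀ σ, |(P σ).det| = 1 := by
    intro σ
    rw [hPdef, Matrix.det_permute, hQdet, mul_one]
    rcases Int.units_eq_one_or (Equiv.Perm.sign σ.symm) with h | h <;> simp [h]
  -- cover of the cube
  have hcover : (Set.pi Set.univ fun _ : Fin (n + 1) => Set.Icc (0 : ℝ) 1) ⊆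
      ⋃ σ : Equiv.Perm (Fin (n + 1)), Matrix.toLin' (P σ) '' S := by
    intro u hu
    have hu' : ∀ i, u i ∈ Set.Icc (0 : ℝ) 1 := fun i => hu i (Set.mem_univ i)
    set σ := Tuple.sort u with hσ
    have hmono : Monotone (u ∘ σ) := Tuple.monotone_sort u
    set v : Fin (n + 1) → ℝ := u ∘ σ with hvdef
    set w : Fin (n + 1) → ℝ := Fin.cons (v 0) (fun i => v i.succ - v i.castSucc) with hwdef
    have hps : ∀ i : Fin (n + 1), ∑ j, (if j.val ≤ i.val then w j else 0) = v i := by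
      intro i
      induction i using Fin.induction with
      | zero =>
        rw [Fin.sum_univ_succ]
        simp [hwdef]
      | succ i ih =>
        have split : ∀ j : Fin (n + 1), (if j.val ≤ i.succ.val then w j else 0)
            = (if j.val ≤ i.castSucc.val then w j else 0)
              + (if j = i.succ then w j else 0) := by
          intro j
          have h1 : i.succ.val = i.val + 1 := rfl
          have h2 : i.castSucc.val = i.val := rfl
          have h3 : (j = i.succ) ↔ j.val = i.val + 1 := by
            rw [Fin.ext_iff, h1]
          rw [h1, h2]
          by_cases hj : j.val = i.val + 1
          · rw [if_pos (le_of_eq hj), if_neg (by omega), if_pos (h3.mpr hj), zero_add]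
          · rw [if_neg (h3.not.mpr hj), add_zero]
            by_cases hj2 : j.val ≤ i.val
            · rw [if_pos (by omega), if_pos hj2]
            · rw [if_neg (by omega), if_neg hj2]
        rw [Finset.sum_congr rfl (fun j _ => split j), Finset.sum_add_distrib, ih,
          Finset.sum_ite_eq' Finset.univ i.succ w, if_pos (Finset.mem_univ _)]
        have : w i.succ = v i.succ - v i.castSucc := by
          rw [hwdef, Fin.cons_succ]
        rw [this]; ring
    have hwS : w ∈ S := by
      constructor
      · intro i
        refine Fin.cases ?_ (fun i => ?_) i
        · rw [hwdef, Fin.cons_zero]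
          exact (hu' (σ 0)).1
        · rw [hwdef, Fin.cons_succ]
          exact sub_nonneg.mpr (hmono (Fin.castSucc_lt_succ (i := i)).le)
      · have : ∑ j, w j = v (Fin.last n) := by
          rw [← hps (Fin.last n)]
          refine Finset.sum_congr rfl fun j _ => ?_
          rw [if_pos]
          exact Fin.is_le j
        rw [this]
        exact (hu' (σ (Fin.last n))).2
    refine Set.mem_iUnion_of_mem σ ⟨w, hwS, ?_⟩
    funext m
    rw [Matrix.toLin'_apply]
    show ∑ j, P σ m j * w j = u m
    have : ∀ j, P σ m j * w j = if j.val ≤ (σ.symm m).val then w j else 0 := by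
      intro j
      rw [hPdef]
      simp only [Matrix.submatrix_apply, id, hQdef, Matrix.of_apply, ite_mul, one_mul, zero_mul]
    rw [Finset.sum_congr rfl (fun j _ => this j), hps (σ.symm m)]
    show u (σ (σ.symm m)) = u m
    rw [Equiv.apply_symm_apply]
  -- volume computation
  have himg : ∀ σ : Equiv.Perm (Fin (n + 1)),
      volume (Matrix.toLin' (P σ) '' S) = volume S := by
    intro σ
    rw [Measure.addHaar_image_linearMap, LinearMap.det_toLin', hPdet σ, ENNReal.ofReal_one, one_mul]
  have hcube : volume (Set.pi Set.univ fun _ : Fin (n + 1) => Set.Icc (0 : ℝ) 1) = 1 := by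
    rw [volume_pi_pi]
    simp [Real.volume_Icc]
  calc (1 : ℝ≥0∞) = volume (Set.pi Set.univ fun _ : Fin (n + 1) => Set.Icc (0 : ℝ) 1) :=
        hcube.symm
    _ ≤ volume (⋃ σ : Equiv.Perm (Fin (n + 1)), Matrix.toLin' (P σ) '' S) :=
        measure_mono hcover
    _ ≤ ∑' σ : Equiv.Perm (Fin (n + 1)), volume (Matrix.toLin' (P σ) '' S) :=
        measure_iUnion_le _
    _ = (Nat.factorial (n + 1) : ℝ≥0∞) * volume S := by
        rw [tsum_congr himg, tsum_fintype]
        simp [Finset.card_univ, Fintype.card_perm, Fintype.card_fin, mul_comm,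
          ← nsmul_eq_mul]


/-- (Simplex Lemma) Let `N ≥ 1` be an integer and `k > 1` a real number.  Let `E ⊆ ℝ^N` be a
convex set whose `N`-dimensional Lebesgue measure satisfies `|E| ≤ (N!)⁻¹ k^{-(N+1)}`.
Suppose that `E` contains the `N + 1` rational points `(pᵢ⁽¹⁾/qᵢ, …, pᵢ⁽ᴺ⁾/qᵢ)`,
`0 ≤ i ≤ N`, where each `pᵢ⁽ʲ⁾ ∈ ℤ` and each `qᵢ` is an integer with `1 ≤ qᵢ < k`.
Then these `N + 1` rational points all lie in some affine hyperplane of `ℝ^N`. -/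
theorem simplex_lemma (N : ℕ) (hN : 1 ≤ N) (k : ℝ) (hk : 1 < k)
    (E : Set (Fin N → ℝ)) (hconv : Convex ℝ E)
    (hvol : volume E ≤ ENNReal.ofReal (((N.factorial : ℝ) * k ^ (N + 1))⁻¹))
    (p : Fin (N + 1) → Fin N → ℤ) (q : Fin (N + 1) → ℤ)
    (hq : ∀ i, 1 ≤ q i ∧ (q i : ℝ) < k)
    (hmem : ∀ i, (fun j => (p i j : ℝ) / (q i : ℝ)) ∈ E) :
    ∃ (v : Fin N → ℝ) (t : ℝ), v ≠ 0 ∧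
      ∀ i, ∑ j, v j * ((p i j : ℝ) / (q i : ℝ)) = t := by
  classical
  have hq0 : ∀ i, (q i : ℝ) ≠ 0 := by
    intro i
    have h1 : (1 : ℝ) ≤ (q i : ℝ) := by exact_mod_cast (hq i).1
    linarith
  set x : Fin (N + 1) → Fin N → ℝ := fun i j => (p i j : ℝ) / (q i : ℝ) with hxdef
  set BZ : Matrix (Fin (N + 1)) (Fin (N + 1)) ℤ :=
    Matrix.of fun i => Fin.cons (q i) (p i) with hBZdef
  by_cases hdet : BZ.det = 0
  · -- degenerate case : produce the hyperplane
    obtain ⟨v, hv0, hv⟩ := Matrix.exists_mulVec_eq_zero_iff.mpr hdet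
    have hveq : ∀ i, (q i : ℤ) * v 0 + ∑ j, p i j * v j.succ = 0 := by
      intro i
      have := congrFun hv i
      simpa [Matrix.mulVec, dotProduct, hBZdef, Fin.sum_univ_succ, Fin.cons_zero,
        Fin.cons_succ] using this
    refine ⟨fun j : Fin N => (v j.succ : ℝ), -(v 0 : ℝ), ?_, ?_⟩
    · intro h
      apply hv0
      have hs : ∀ j : Fin N, v j.succ = 0 := by
        intro j
        have := congrFun h j
        simp only [Pi.zero_apply] at this
        exact_mod_cast this
      have h0 : v 0 = 0 := by
        have := hveq 0
        simp only [hs, mul_zero, Finset.sum_const_zero, add_zero] at this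
        have hq1 := (hq 0).1
        exact by nlinarith [this]
      funext i
      refine Fin.cases ?_ (fun j => ?_) i
      · exact h0
      · exact hs j
    · intro i
      have hR : (q i : ℝ) * (v 0 : ℝ) + ∑ j, (p i j : ℝ) * (v j.succ : ℝ) = 0 := by
        exact_mod_cast congrArg (Int.cast : ℤ → ℝ) (hveq i)
      have hrw : ∑ j, (v j.succ : ℝ) * ((p i j : ℝ) / (q i : ℝ))
          = (∑ j, (p i j : ℝ) * (v j.succ : ℝ)) / (q i : ℝ) := by
        rw [Finset.sum_div]
        exact Finset.sum_congr rfl fun j _ => by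
          field_simp
      rw [hrw, show (∑ j, (p i j : ℝ) * (v j.succ : ℝ)) = -((q i : ℝ) * (v 0 : ℝ)) by
        linarith, neg_div, mul_div_assoc]
      rw [mul_div_assoc', mul_comm, mul_div_assoc, div_self (hq0 i), mul_one]
  · -- nondegenerate case : contradiction with the volume bound
    exfalso
    set C : Matrix (Fin (N + 1)) (Fin (N + 1)) ℝ := Matrix.of fun i => Fin.cons 1 (x i) with hCdef
    have hBC : BZ.map (Int.cast : ℤ → ℝ) = Matrix.of fun i l => (q i : ℝ) * C i l := by
      ext i l
      refine Fin.cases ?_ (fun j => ?_) l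
      · simp [hBZdef, hCdef, Fin.cons_zero]
      · simp only [hBZdef, hCdef, Matrix.map_apply, Matrix.of_apply, Fin.cons_succ, hxdef]
        rw [mul_div_assoc', mul_comm, mul_div_assoc, div_self (hq0 i), mul_one]
    have hdetBC : ((BZ.det : ℤ) : ℝ) = (∏ i, (q i : ℝ)) * C.det := by
      have h1 : (BZ.map (Int.cast : ℤ → ℝ)).det = ((BZ.det : ℤ) : ℝ) :=
        (RingHom.map_det (Int.castRingHom ℝ) BZ).symm
      rw [← h1, hBC, Matrix.det_mul_column]
    set D : Matrix (Fin (N + 1)) (Fin (N + 1)) ℝ :=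
      Matrix.of fun i => if i = 0 then Fin.cons 1 (x 0)
        else Fin.cons 0 (fun j => x i j - x 0 j) with hDdef
    have hCD : C.det = D.det := by
      refine Matrix.det_eq_of_forall_row_eq_smul_add_const
        (fun i => if i = 0 then 0 else 1) 0 (if_pos rfl) ?_
      intro i j
      by_cases hi : i = 0
      · subst hi
        simp [hCdef, hDdef]
      · simp only [hDdef, Matrix.of_apply]
        rw [if_neg hi, if_true]
        simp only [if_neg hi, one_mul]
        refine Fin.cases ?_ (fun jj => ?_) j
        · simp [hCdef]
        · simp only [hCdef, Matrix.of_apply, Fin.cons_succ]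
          ring
    set Mr : Matrix (Fin N) (Fin N) ℝ := Matrix.of fun i j => x i.succ j - x 0 j with hMrdef
    have hDM : D.det = Mr.det := by
      rw [Matrix.det_succ_column_zero, Finset.sum_eq_single 0]
      · have hsub : D.submatrix (Fin.succAbove 0) Fin.succ = Mr := by
          ext i j
          simp [hDdef, Fin.succAbove_zero, Fin.cons_succ, hMrdef, Fin.succ_ne_zero]
        rw [hsub]
        simp [hDdef, Fin.cons_zero]
      · intro i _ hi
        simp [hDdef, hi, Fin.cons_zero]
      · intro h
        exact absurd (Finset.mem_univ _) h
    have hMrdet : ((BZ.det : ℤ) : ℝ) = (∏ i, (q i : ℝ)) * Mr.det := by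
      rw [hdetBC, hCD, hDM]
    -- the simplex is contained in E
    set S : Set (Fin N → ℝ) := {w | (∀ i, 0 ≤ w i) ∧ ∑ i, w i ≤ 1} with hSdef
    have hsub : (fun w => x 0 + Matrix.toLin' Mr.transpose w) '' S ⊆ E := by
      rintro _ ⟨w, ⟨hw0, hw1⟩, rfl⟩
      have hmemE : ∑ i : Fin (N + 1), (Fin.cons (1 - ∑ j, w j) w : Fin (N + 1) → ℝ) i • x i ∈ E := by
        refine hconv.sum_mem ?_ ?_ ?_
        · intro i _
          refine Fin.cases ?_ (fun i => ?_) i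
          · rw [Fin.cons_zero]
            linarith
          · rw [Fin.cons_succ]
            exact hw0 i
        · rw [Fin.sum_univ_succ]
          simp only [Fin.cons_zero, Fin.cons_succ]
          ring
        · intro i _
          exact hmem i
      convert hmemE using 1
      funext m
      rw [Finset.sum_apply, Fin.sum_univ_succ]
      simp only [Fin.cons_zero, Fin.cons_succ, Pi.smul_apply, smul_eq_mul, Pi.add_apply]
      rw [Matrix.toLin'_apply]
      show x 0 m + ∑ i, Mr.transpose m i * w i = _
      have hterm : ∀ i : Fin N, Mr.transpose m i * w i = w i * x i.succ m - w i * x 0 m := by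
        intro i
        simp only [Matrix.transpose_apply, hMrdef, Matrix.of_apply]
        ring
      rw [Finset.sum_congr rfl fun i _ => hterm i, Finset.sum_sub_distrib, ← Finset.sum_mul]
      ring
    -- volume of the simplex
    have himg : volume ((fun w => x 0 + Matrix.toLin' Mr.transpose w) '' S)
        = ENNReal.ofReal |Mr.det| * volume S := by
      have h1 : (fun w => x 0 + Matrix.toLin' Mr.transpose w) '' S
          = (fun y => x 0 + y) '' ((Matrix.toLin' Mr.transpose) '' S) := by
        rw [Set.image_image]
      rw [h1, Set.image_add_left, measure_preimage_add, Measure.addHaar_image_linearMap,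
        LinearMap.det_toLin', Matrix.det_transpose]
    -- lower bound for the determinant
    have hq1 : ∀ i, (1 : ℝ) ≤ (q i : ℝ) := fun i => by exact_mod_cast (hq i).1
    have hkpos : (0 : ℝ) < k ^ (N + 1) := by positivity
    have hprodpos : (0 : ℝ) < ∏ i, (q i : ℝ) :=
      Finset.prod_pos fun i _ => lt_of_lt_of_le one_pos (hq1 i)
    have hprodlt : ∏ i, (q i : ℝ) < k ^ (N + 1) := by
      calc ∏ i, (q i : ℝ) < ∏ _i : Fin (N + 1), k := by
            refine Finset.prod_lt_prod_of_nonempty ?_ ?_ Finset.univ_nonempty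
            · intro i _
              linarith [hq1 i]
            · intro i _
              exact (hq i).2
        _ = k ^ (N + 1) := by
            rw [Finset.prod_const, Finset.card_univ, Fintype.card_fin]
    have hbz1 : (1 : ℝ) ≤ |((BZ.det : ℤ) : ℝ)| := by
      have : 1 ≤ |BZ.det| := Int.one_le_abs hdet
      calc (1 : ℝ) ≤ (|BZ.det| : ℤ) := by exact_mod_cast this
        _ = |((BZ.det : ℤ) : ℝ)| := by push_cast; rfl
    have hMrlb : (k ^ (N + 1))⁻¹ < |Mr.det| := by
      have habs : |((BZ.det : ℤ) : ℝ)| = (∏ i, (q i : ℝ)) * |Mr.det| := by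
        rw [hMrdet, abs_mul, abs_of_pos hprodpos]
      have h2 : 1 ≤ (∏ i, (q i : ℝ)) * |Mr.det| := habs ▸ hbz1
      have h3 : (∏ i, (q i : ℝ))⁻¹ ≤ |Mr.det| := by
        rw [inv_le_iff_one_le_mul₀ hprodpos] at *
        linarith [h2]
      calc (k ^ (N + 1))⁻¹ < (∏ i, (q i : ℝ))⁻¹ := by
            exact inv_strictAnti₀ hprodpos hprodlt
        _ ≤ |Mr.det| := h3
    -- volume of the standard simplex
    have hvolS : 1 ≤ (N.factorial : ℝ≥0∞) * volume S := by
      obtain ⟨n, rfl⟩ : ∃ n, N = n + 1 := ⟨N - 1, (Nat.succ_pred_eq_of_pos hN).symm⟩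
      exact simplex_set_vol n
    have hfacpos : (0 : ℝ) < (N.factorial : ℝ) := by
      exact_mod_cast N.factorial_pos
    have hvolS' : ENNReal.ofReal ((N.factorial : ℝ))⁻¹ ≤ volume S := by
      have ha : ((N.factorial : ℕ) : ℝ≥0∞) ≠ 0 := by
        exact_mod_cast N.factorial_pos.ne'
      have ha' : ((N.factorial : ℕ) : ℝ≥0∞) ≠ ⊤ := ENNReal.natCast_ne_top _
      have : ((N.factorial : ℕ) : ℝ≥0∞)⁻¹ ≤ volume S := by
        calc ((N.factorial : ℕ) : ℝ≥0∞)⁻¹ = ((N.factorial : ℕ) : ℝ≥0∞)⁻¹ * 1 := (mul_one _).symm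
          _ ≤ ((N.factorial : ℕ) : ℝ≥0∞)⁻¹ * (((N.factorial : ℕ) : ℝ≥0∞) * volume S) :=
              mul_le_mul_right hvolS _
          _ = volume S := by
              rw [← mul_assoc, ENNReal.inv_mul_cancel ha ha', one_mul]
      refine le_trans (le_of_eq ?_) this
      rw [← ENNReal.ofReal_natCast N.factorial, ← ENNReal.ofReal_inv_of_pos hfacpos]
    -- assemble the contradiction
    have hlow : ENNReal.ofReal (|Mr.det| * (N.factorial : ℝ)⁻¹) ≤ volume E := by
      calc ENNReal.ofReal (|Mr.det| * (N.factorial : ℝ)⁻¹)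
          = ENNReal.ofReal |Mr.det| * ENNReal.ofReal ((N.factorial : ℝ))⁻¹ := by
            rw [ENNReal.ofReal_mul (abs_nonneg _)]
        _ ≤ ENNReal.ofReal |Mr.det| * volume S := mul_le_mul_right hvolS' _
        _ = volume ((fun w => x 0 + Matrix.toLin' Mr.transpose w) '' S) := himg.symm
        _ ≤ volume E := measure_mono hsub
    have hfin : ENNReal.ofReal (|Mr.det| * (N.factorial : ℝ)⁻¹)
        ≤ ENNReal.ofReal (((N.factorial : ℝ) * k ^ (N + 1))⁻¹) := le_trans hlow hvol
    have hreal : |Mr.det| * (N.factorial : ℝ)⁻¹ ≤ ((N.factorial : ℝ) * k ^ (N + 1))⁻¹ := by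
      have hnn : 0 ≤ ((N.factorial : ℝ) * k ^ (N + 1))⁻¹ := by positivity
      exact (ENNReal.ofReal_le_ofReal_iff hnn).mp hfin
    rw [mul_inv] at hreal
    have : (k ^ (N + 1))⁻¹ * (N.factorial : ℝ)⁻¹ < |Mr.det| * (N.factorial : ℝ)⁻¹ := by
      have := hMrlb
      have hfi : (0 : ℝ) < (N.factorial : ℝ)⁻¹ := by positivity
      nlinarith
    linarith [hreal, this]
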